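/- arXiv:2112.13376 — 3 statements merged into one kernel-verified Lean document; each statement's English description precedes it below -/
import Mathlib

section
/- Let p ∉ {2,5} be a prime, α ≥ 1 and k, L ≥ 1 integers. Then p^α divides ρ_{k,L} if and only if h_{p^α,L} divides k. -/
def rho (k L : ℕ) : ℕ := ∑ i ∈ Finset.range k, 10 ^ (L * i)

/-- `h p α L` is the multiplicative order of `10^L` modulo `p^(α + ord_p(10^L - 1))`. -/
noncomputable def h (p α L : ℕ) : ℕ :=
  orderOf ((10 : ZMod (p ^ (α + padicValNat p (10 ^ L - 1)))) ^ L)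

lemma rho_mul_int (k L : ℕ) :
    (rho k L : ℤ) * ((10:ℤ)^L - 1) = (10:ℤ)^(L*k) - 1 := by
  have hcast : (rho k L : ℤ) = ∑ i ∈ Finset.range k, ((10:ℤ)^L) ^ i := by
    simp [rho, ← pow_mul]
  rw [hcast, geom_sum_mul, ← pow_mul]

lemma rho_mul (k L : ℕ) : rho k L * (10^L - 1) = 10^(L*k) - 1 := by
  have h1 : (1:ℕ) ≤ 10^L := Nat.one_le_pow _ _ (by norm_num)
  have h2 : (1:ℕ) ≤ 10^(L*k) := Nat.one_le_pow _ _ (by norm_num)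
  zify [h1, h2]
  exact rho_mul_int k L

theorem pow_dvd_rho_iff (p : ℕ) (hp : p.Prime) (hp2 : p ≠ 2) (hp5 : p ≠ 5)
    (α k L : ℕ) (hα : 1 ≤ α) (hk : 1 ≤ k) (hL : 1 ≤ L) :
    p ^ α ∣ rho k L ↔ h p α L ∣ k := by
  set β := padicValNat p (10 ^ L - 1) with hβ
  set n := p ^ (α + β) with hn
  have hpd10 : ¬ p ∣ 10 := by
    intro hd
    have h2le := hp.two_le
    have h10 := Nat.le_of_dvd (by norm_num) hd
    interval_cases p <;> first | omega | exact absurd hp (by norm_num)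
  have h1 : (1:ℕ) ≤ 10^L := Nat.one_le_pow _ _ (by norm_num)
  have hNpos : 0 < 10^L - 1 := by
    have : (1:ℕ) < 10^L := Nat.one_lt_pow (by omega) (by norm_num)
    omega
  have h2 : (1:ℕ) ≤ 10^(L*k) := Nat.one_le_pow _ _ (by norm_num)
  -- Step 1: p^α ∣ rho k L ↔ n ∣ 10^(L*k) - 1
  have step1 : p ^ α ∣ rho k L ↔ n ∣ 10^(L*k) - 1 := by
    rw [← rho_mul k L]
    constructor
    · intro hd
      rw [hn, pow_add]
      exact mul_dvd_mul hd (pow_padicValNat_dvd)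
    · intro hd
      have hfac : β = (10^L - 1).factorization p := by
        rw [Nat.factorization_def _ hp]
      obtain ⟨t, ht⟩ : p ^ β ∣ 10^L - 1 := pow_padicValNat_dvd
      have hpβpos : 0 < p ^ β := pow_pos hp.pos _
      have htdiv : t = (10^L - 1) / p ^ β := by
        rw [ht]; exact (Nat.mul_div_cancel_left _ hpβpos).symm
      have hc : ¬ p ∣ t := by
        rw [htdiv, hfac]
        exact Nat.not_dvd_ordCompl hp (by omega)
      rw [ht, hn] at hd
      have hd' : p ^ β * p ^ α ∣ p ^ β * (rho k L * t) := by
        have e1 : p ^ β * p ^ α = p ^ (α + β) := by rw [← pow_add, add_comm]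
        have e2 : p ^ β * (rho k L * t) = rho k L * (p ^ β * t) := by ring
        rw [e1, e2]; exact hd
      have hd'' : p ^ α ∣ rho k L * t := (Nat.mul_dvd_mul_iff_left hpβpos).mp hd'
      exact (Nat.Coprime.pow_left α (hp.coprime_iff_not_dvd.mpr hc)).dvd_of_dvd_mul_right hd''
  -- Step 2: h p α L ∣ k ↔ n ∣ 10^(L*k) - 1
  have step2 : h p α L ∣ k ↔ n ∣ 10^(L*k) - 1 := by
    rw [h, orderOf_dvd_iff_pow_eq_one, ← pow_mul]
    have : ((10 : ZMod n) ^ (L * k) = 1) ↔ ((10^(L*k) : ℕ) : ZMod n) = ((1:ℕ) : ZMod n) := by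
      push_cast
      rfl
    rw [this, ZMod.natCast_eq_natCast_iff]
    exact ⟨fun hmod => (Nat.modEq_iff_dvd' h2).mp hmod.symm,
      fun hdvd => ((Nat.modEq_iff_dvd' h2).mpr hdvd).symm⟩
  rw [step1, step2]
end

section
/- Let n ≥ 1 be an integer with 10 ∤ n and with L decimal digits, and let k ≥ 1. Then the decimal digit reversal of n(k) = n · ρ_{k,L} equals r(n) · ρ_{k,L}, where r(n) is the decimal digit reversal of n. -/
/-- decimal digit reversal -/
def r (n : ℕ) : ℕ := Nat.ofDigits 10 (Nat.digits 10 n).reverse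

lemma ofDigits_join_replicate (m : List ℕ) (k : ℕ) :
    Nat.ofDigits 10 (List.flatten (List.replicate k m)) = Nat.ofDigits 10 m * rho k m.length := by
  induction k with
  | zero => simp [rho]
  | succ k ih =>
    rw [List.replicate_succ, List.flatten_cons, Nat.ofDigits_append, ih]
    have : rho (k + 1) m.length = 1 + 10 ^ m.length * rho k m.length := by
      unfold rho
      rw [Finset.sum_range_succ', Finset.mul_sum]
      simp only [mul_zero, pow_zero]
      rw [add_comm]
      congr 1
      refine Finset.sum_congr rfl fun i _ => ?_
      rw [← pow_add]
      ring_nf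
    rw [this]
    push_cast
    ring

lemma reverse_join_replicate (m : List ℕ) (k : ℕ) :
    (List.flatten (List.replicate k m)).reverse = List.flatten (List.replicate k m.reverse) := by
  rw [List.reverse_flatten, List.map_replicate, List.reverse_replicate]

theorem reverse_repConcat (n L k : ℕ) (hn : 1 ≤ n) (hten : ¬ 10 ∣ n)
    (hL : (Nat.digits 10 n).length = L) (hk : 1 ≤ k) :
    r (n * rho k L) = r n * rho k L := by
  set d := Nat.digits 10 n with hd
  have hne : d ≠ [] := Nat.digits_ne_nil_iff_ne_zero.mpr (by omega)
  have hofd : Nat.ofDigits 10 (List.flatten (List.replicate k d)) = n * rho k L := by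
    rw [ofDigits_join_replicate, Nat.ofDigits_digits, hL]
  have hdig : Nat.digits 10 (n * rho k L) = List.flatten (List.replicate k d) := by
    rw [← hofd]
    apply Nat.digits_ofDigits _ (by norm_num)
    · intro l hl
      rcases List.mem_flatten.mp hl with ⟨m, hm, hl⟩
      rw [List.eq_of_mem_replicate hm] at hl
      exact Nat.digits_lt_base (by norm_num) hl
    · intro h
      simp only [List.getLast_eq_head_reverse, reverse_join_replicate]
      obtain ⟨k', rfl⟩ : ∃ k', k = k' + 1 := ⟨k - 1, by omega⟩
      simp only [List.replicate_succ, List.flatten_cons]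
      rw [List.head_append_of_ne_nil (by simpa using hne)]
      simpa using Nat.getLast_digit_ne_zero 10 (show n ≠ 0 by omega)
  have hlen : d.reverse.length = L := by rw [List.length_reverse, hL]
  rw [r, hdig, reverse_join_replicate, ofDigits_join_replicate, hlen, r]
end

section
/- Let n ≥ 1 with 10 ∤ n and L decimal digits, k ≥ 1, and let p be a prime. Then p divides exactly one of n(k) and r(n)·ρ_{k,L} to different exponents (i.e., ord_p(n(k)) ≠ ord_p(r(n(k)))) if and only if ord_p(n) ≠ ord_p(r(n)). Hence the set of 'crucial primes' of n(k) equals that of n. -/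
lemma rho_pos (k L : ℕ) (hk : 1 ≤ k) : 0 < rho k L := by
  unfold rho
  calc 0 < 10 ^ (L * 0) := by positivity
    _ ≤ ∑ i ∈ Finset.range k, 10 ^ (L * i) :=
      Finset.single_le_sum (f := fun i => 10 ^ (L * i)) (fun i _ => Nat.zero_le _)
        (Finset.mem_range.mpr hk)

lemma r_pos (n : ℕ) (hn : 1 ≤ n) : 0 < r n := by
  have hne : n ≠ 0 := by omega
  have hd : Nat.digits 10 n ≠ [] := Nat.digits_ne_nil_iff_ne_zero.mpr hne
  have hlast := Nat.getLast_digit_ne_zero 10 hne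
  unfold r
  cases hrev : (Nat.digits 10 n).reverse with
  | nil => exact absurd (by simpa using hrev) hd
  | cons a t =>
    have ha : a = (Nat.digits 10 n).getLast hd := by
      have h2 : (Nat.digits 10 n).reverse ≠ [] := by simp [hd]
      have := List.head_reverse (l := Nat.digits 10 n) h2
      have h3 : (Nat.digits 10 n).reverse.head h2 = a := by simp [hrev]
      exact h3.symm.trans this
    rw [Nat.ofDigits_cons]
    have : a ≠ 0 := by rw [ha]; exact hlast
    omega

theorem crucial_primes_invariant (n L k p : ℕ) (hn : 1 ≤ n) (hten : ¬ 10 ∣ n)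
    (hL : (Nat.digits 10 n).length = L) (hk : 1 ≤ k) (hp : p.Prime) :
    padicValNat p (n * rho k L) ≠ padicValNat p (r n * rho k L) ↔
      padicValNat p n ≠ padicValNat p (r n) := by
  have hrho : rho k L ≠ 0 := (rho_pos k L hk).ne'
  have hn0 : n ≠ 0 := by omega
  have hr0 : r n ≠ 0 := (r_pos n hn).ne'
  haveI : Fact p.Prime := ⟨hp⟩
  rw [padicValNat.mul hn0 hrho, padicValNat.mul hr0 hrho]
  omega
end
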